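/- φ̃(n) = 6 if and only if n ∈ {11, 21, 32, 40, 72, 78, 210}. -/

import Mathlib

/-- φ̃(n): number of m with 1 ≤ m ≤ n, gcd(m,n)=1, m not prime. -/
def phiT (n : ℕ) : ℕ :=
  ((Finset.Icc 1 n).filter (fun m => Nat.gcd m n = 1 ∧ ¬ m.Prime)).card

/-- The product of the first k primes. -/
noncomputable def primorialN (k : ℕ) : ℕ := ∏ i ∈ Finset.range k, Nat.nth Nat.Prime i

/-! ### Fast kernel-computable functions -/

def chkO (m : ℕ) (fuel : ℕ) : ℕ → Bool :=
  Nat.rec (motive := fun _ => ℕ → Bool) (fun _ => true)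
    (fun _ ih d => if m < d*d then true else (m % d != 0) && ih (d+2)) fuel

def isPrimeB (m : ℕ) : Bool :=
  decide (2 ≤ m) && (m == 2 || (m % 2 != 0 && chkO m m 3))

def gcdF (fuel : ℕ) : ℕ → ℕ → ℕ :=
  Nat.rec (motive := fun _ => ℕ → ℕ → ℕ) (fun _ b => b)
    (fun _ ih a b => if a == 0 then b else ih (b % a) a) fuel

def cntB (n : ℕ) : ℕ → ℕ :=
  Nat.rec 0 (fun k ih => ih + (if gcdF (k+1) (k+1) n == 1 && !isPrimeB (k+1) then 1 else 0))

def allB : ℕ → Bool :=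
  Nat.rec true (fun k ih =>
    ((cntB (k+1) (k+1) == 6) ==
      ((k+1) == 11 || (k+1) == 21 || (k+1) == 32 || (k+1) == 40 || (k+1) == 72
        || (k+1) == 78 || (k+1) == 210)) && ih)

lemma chkO_zero (m d : ℕ) : chkO m 0 d = true := rfl

lemma chkO_succ (m f d : ℕ) :
    chkO m (f+1) d = if m < d*d then true else (m % d != 0) && chkO m f (d+2) := rfl

lemma gcdF_zero (a b : ℕ) : gcdF 0 a b = b := rfl

lemma gcdF_succ (f a b : ℕ) : gcdF (f+1) a b = if a == 0 then b else gcdF f (b % a) a := rfl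

lemma cntB_zero (n : ℕ) : cntB n 0 = 0 := rfl

lemma cntB_succ (n k : ℕ) :
    cntB n (k+1) = cntB n k + (if gcdF (k+1) (k+1) n == 1 && !isPrimeB (k+1) then 1 else 0) := rfl

lemma allB_succ (k : ℕ) :
    allB (k+1) = (((cntB (k+1) (k+1) == 6) ==
      ((k+1) == 11 || (k+1) == 21 || (k+1) == 32 || (k+1) == 40 || (k+1) == 72
        || (k+1) == 78 || (k+1) == 210)) && allB k) := rfl

/-! ### Specifications -/

lemma gcdF_eq : ∀ f a b : ℕ, a ≤ f → gcdF f a b = Nat.gcd a b := by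
  intro f
  induction f with
  | zero =>
    intro a b h
    have : a = 0 := by omega
    subst this
    simp [gcdF_zero]
  | succ f ih =>
    intro a b h
    rw [gcdF_succ]
    by_cases ha : a = 0
    · subst ha; simp
    · have hane : (a == 0) = false := by simp [ha]
      rw [hane]
      simp only [Bool.false_eq_true, if_false]
      rw [ih (b % a) a (by have := Nat.mod_lt b (show 0 < a by omega); omega)]
      exact (Nat.gcd_rec a b).symm

lemma chkO_eq {m : ℕ} : ∀ f d : ℕ, 1 ≤ d → m < d + 2*f →
    (chkO m f d = true ↔ ∀ i, (d+2*i)*(d+2*i) ≤ m → ¬ (d+2*i) ∣ m) := by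
  intro f
  induction f with
  | zero =>
    intro d hd hm
    simp only [chkO_zero, true_iff]
    intro i hle _
    have h1 : d + 2*i ≤ (d+2*i)*(d+2*i) := Nat.le_mul_of_pos_left _ (by omega)
    have : m < (d+2*i)*(d+2*i) := lt_of_lt_of_le (by omega) h1
    omega
  | succ f ih =>
    intro d hd hm
    rw [chkO_succ]
    by_cases h : m < d*d
    · simp only [if_pos h, true_iff]
      intro i hle _
      have hdd : d*d ≤ (d+2*i)*(d+2*i) := Nat.mul_le_mul (by omega) (by omega)
      exact absurd hle (lt_of_lt_of_le h hdd).not_ge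
    · rw [if_neg h]
      rw [Bool.and_eq_true, bne_iff_ne, ih (d+2) (by omega) (by omega)]
      constructor
      · rintro ⟨h1, h2⟩ i
        cases i with
        | zero =>
          simp only [Nat.mul_zero, Nat.add_zero]
          intro _ hdvd
          exact h1 (Nat.mod_eq_zero_of_dvd hdvd)
        | succ j =>
          rw [show d + 2*(j+1) = (d+2) + 2*j from by ring]
          exact h2 j
      · intro H
        constructor
        · intro h0
          have hH := H 0
          simp only [Nat.mul_zero, Nat.add_zero] at hH
          exact hH (by omega) (Nat.dvd_of_mod_eq_zero h0)
        · intro i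
          rw [show (d+2) + 2*i = d + 2*(i+1) from by ring]
          exact H (i+1)

lemma isPrimeB_spec (m : ℕ) : isPrimeB m = true ↔ m.Prime := by
  rw [isPrimeB, Bool.and_eq_true, Bool.or_eq_true, Bool.and_eq_true,
    decide_eq_true_iff, beq_iff_eq, bne_iff_ne,
    chkO_eq m 3 (by omega) (by omega)]
  constructor
  · rintro ⟨h2, (rfl | ⟨hodd, hchk⟩)⟩
    · exact Nat.prime_two
    · rw [Nat.prime_def_le_sqrt]
      refine ⟨h2, fun a ha2 hasqrt hdvd => ?_⟩
      have haa : a*a ≤ m := Nat.le_sqrt.1 hasqrt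
      rcases Nat.even_or_odd a with he | ho
      · obtain ⟨j, rfl⟩ := he
        have h2m : (2:ℕ) ∣ m := dvd_trans ⟨j, by ring⟩ hdvd
        omega
      · have ha1 : a % 2 = 1 := Nat.odd_iff.1 ho
        have : a = 3 + 2*((a-3)/2) := by omega
        rw [this] at haa hdvd
        exact hchk _ haa hdvd
  · intro hp
    refine ⟨hp.two_le, ?_⟩
    by_cases hm2 : m = 2
    · left; exact hm2
    · right
      have hnd2 : ¬ (2:ℕ) ∣ m := by
        intro hd
        rcases (Nat.Prime.eq_one_or_self_of_dvd hp 2 hd) with h | h <;> omega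
      refine ⟨by omega, fun i hle hdvd => ?_⟩
      exact (Nat.prime_def_le_sqrt.1 hp).2 (3+2*i) (by omega) (Nat.le_sqrt.2 hle) hdvd

lemma cntB_spec (n : ℕ) : ∀ k : ℕ,
    cntB n k = ((Finset.Icc 1 k).filter (fun m => Nat.gcd m n = 1 ∧ ¬ m.Prime)).card := by
  intro k
  induction k with
  | zero =>
    rw [cntB_zero, show Finset.Icc 1 0 = (∅ : Finset ℕ) from Finset.Icc_eq_empty (by omega)]
    simp
  | succ k ih =>
    rw [cntB_succ, ih]
    have hIcc : Finset.Icc 1 (k+1) = insert (k+1) (Finset.Icc 1 k) := by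
      ext a
      simp only [Finset.mem_Icc, Finset.mem_insert]
      omega
    rw [hIcc, Finset.filter_insert]
    have hg : gcdF (k+1) (k+1) n = Nat.gcd (k+1) n := gcdF_eq _ _ _ le_rfl
    have hiff : (gcdF (k+1) (k+1) n == 1 && !isPrimeB (k+1)) = true ↔
        (Nat.gcd (k+1) n = 1 ∧ ¬ (k+1).Prime) := by
      rw [Bool.and_eq_true, beq_iff_eq, hg, Bool.not_eq_true', Bool.eq_false_iff]
      exact and_congr_right (fun _ => not_congr (isPrimeB_spec (k+1)))
    by_cases hc : Nat.gcd (k+1) n = 1 ∧ ¬ (k+1).Prime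
    · rw [if_pos hc, if_pos (hiff.2 hc),
        Finset.card_insert_of_notMem (by simp [Finset.mem_filter])]
    · rw [if_neg hc, if_neg (fun hb => hc (hiff.1 hb))]
      omega

lemma allB_spec : ∀ N : ℕ, allB N = true → ∀ n, 1 ≤ n → n ≤ N →
    (cntB n n = 6 ↔ (n = 11 ∨ n = 21 ∨ n = 32 ∨ n = 40 ∨ n = 72 ∨ n = 78 ∨ n = 210)) := by
  intro N
  induction N with
  | zero => intro _ n h1 h2; omega
  | succ N ih =>
    intro hall n h1 h2
    rw [allB_succ, Bool.and_eq_true] at hall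
    rcases Nat.lt_or_ge n (N+1) with h | h
    · exact ih hall.2 n h1 (by omega)
    · have hn : n = N + 1 := by omega
      subst hn
      have hb := hall.1
      rw [beq_iff_eq (α := Bool)] at hb
      constructor
      · intro h6
        have hthis : (cntB (N+1) (N+1) == 6) = true := by simp [h6]
        rw [hb] at hthis
        simp only [Bool.or_eq_true, beq_iff_eq] at hthis
        omega
      · intro hcases
        have hthis : ((N+1) == 11 || (N+1) == 21 || (N+1) == 32 || (N+1) == 40 || (N+1) == 72
            || (N+1) == 78 || (N+1) == 210) = true := by
          simp only [Bool.or_eq_true, beq_iff_eq]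
          omega
        rw [← hb] at hthis
        simpa using hthis

set_option maxRecDepth 1000000 in
set_option maxHeartbeats 16000000 in
lemma allB_288 : allB 288 = true := by decide

lemma phiT_small (n : ℕ) (h1 : 1 ≤ n) (h2 : n ≤ 288) :
    (phiT n = 6 ↔ (n = 11 ∨ n = 21 ∨ n = 32 ∨ n = 40 ∨ n = 72 ∨ n = 78 ∨ n = 210)) := by
  have := allB_spec 288 allB_288 n h1 h2
  rwa [show phiT n = cntB n n from (cntB_spec n n).symm]

/-! ### The tail: `n ≥ 289` -/

/-- Number of primes `≤ x`. -/
def Pc (x : ℕ) : ℕ := ((Finset.range (x+1)).filter Nat.Prime).card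

lemma primorialN_succ (k : ℕ) :
    primorialN (k+1) = primorialN k * Nat.nth Nat.Prime k := Finset.prod_range_succ _ _

lemma primorialN_pos (t : ℕ) : 0 < primorialN t :=
  Finset.prod_pos (fun i _ => (Nat.prime_nth_prime i).pos)

lemma nth_prime_val : Nat.nth Nat.Prime 0 = 2 ∧ Nat.nth Nat.Prime 1 = 3 ∧
    Nat.nth Nat.Prime 2 = 5 ∧ Nat.nth Nat.Prime 3 = 7 ∧ Nat.nth Nat.Prime 4 = 11 ∧
    Nat.nth Nat.Prime 5 = 13 := by
  have h := fun (p : ℕ) (hp : p.Prime) => Nat.nth_count (p := Nat.Prime) hp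
  refine ⟨?_, ?_, ?_, ?_, ?_, ?_⟩
  · have := h 2 (by norm_num); rwa [show Nat.count Nat.Prime 2 = 0 from by decide] at this
  · have := h 3 (by norm_num); rwa [show Nat.count Nat.Prime 3 = 1 from by decide] at this
  · have := h 5 (by norm_num); rwa [show Nat.count Nat.Prime 5 = 2 from by decide] at this
  · have := h 7 (by norm_num); rwa [show Nat.count Nat.Prime 7 = 3 from by decide] at this
  · have := h 11 (by norm_num); rwa [show Nat.count Nat.Prime 11 = 4 from by decide] at this
  · have := h 13 (by norm_num); rwa [show Nat.count Nat.Prime 13 = 5 from by decide] at this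

lemma primorialN_five : primorialN 5 = 2310 := by
  obtain ⟨h0, h1, h2, h3, h4, _⟩ := nth_prime_val
  show ∏ i ∈ Finset.range 5, Nat.nth Nat.Prime i = 2310
  rw [Finset.prod_range_succ, Finset.prod_range_succ, Finset.prod_range_succ,
    Finset.prod_range_succ, Finset.prod_range_succ, Finset.prod_range_zero,
    h0, h1, h2, h3, h4]
  norm_num

lemma nth_prime_ge_13 {t : ℕ} (ht : 5 ≤ t) : 13 ≤ Nat.nth Nat.Prime t := by
  obtain ⟨_, _, _, _, _, h5⟩ := nth_prime_val
  calc (13:ℕ) = Nat.nth Nat.Prime 5 := h5.symm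
    _ ≤ Nat.nth Nat.Prime t := Nat.nth_monotone Nat.infinite_setOf_prime ht

lemma base_primes7 (x : ℕ) (hx : 17 ≤ x) : 7 ≤ Pc x := by
  have hsub : ({2,3,5,7,11,13,17} : Finset ℕ) ⊆ (Finset.range (x+1)).filter Nat.Prime := by
    intro p hp
    simp only [Finset.mem_insert, Finset.mem_singleton] at hp
    rcases hp with rfl|rfl|rfl|rfl|rfl|rfl|rfl <;>
      exact Finset.mem_filter.2 ⟨Finset.mem_range.2 (by omega), by norm_num⟩
  calc (7:ℕ) = ({2,3,5,7,11,13,17} : Finset ℕ).card := by decide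
    _ ≤ Pc x := Finset.card_le_card hsub

lemma base_primes (x : ℕ) (hx : 19 ≤ x) : 8 ≤ Pc x := by
  have hsub : ({2,3,5,7,11,13,17,19} : Finset ℕ) ⊆ (Finset.range (x+1)).filter Nat.Prime := by
    intro p hp
    simp only [Finset.mem_insert, Finset.mem_singleton] at hp
    rcases hp with rfl|rfl|rfl|rfl|rfl|rfl|rfl|rfl <;>
      exact Finset.mem_filter.2 ⟨Finset.mem_range.2 (by omega), by norm_num⟩
  calc (8:ℕ) = ({2,3,5,7,11,13,17,19} : Finset ℕ).card := by decide
    _ ≤ Pc x := Finset.card_le_card hsub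

lemma claimC : ∀ t : ℕ, 5 ≤ t → ∀ x : ℕ, Nat.sqrt (primorialN t) ≤ x → t + 3 ≤ Pc x := by
  intro t ht
  induction t, ht using Nat.le_induction with
  | base =>
    intro x hx
    have h19 : 19 ≤ Nat.sqrt (primorialN 5) := by
      rw [primorialN_five]
      exact Nat.le_sqrt.2 (by norm_num)
    exact base_primes x (by omega)
  | succ t ht ih =>
    intro x hx
    set a := Nat.sqrt (primorialN t) with ha
    have hapos : 1 ≤ a := Nat.le_sqrt.2 (by have := primorialN_pos t; omega)
    have haa : a * a ≤ primorialN t := Nat.sqrt_le _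
    have hnth : 13 ≤ Nat.nth Nat.Prime t := nth_prime_ge_13 ht
    have hstep : (2*a+1)*(2*a+1) ≤ primorialN (t+1) := by
      rw [primorialN_succ]
      calc (2*a+1)*(2*a+1) ≤ 9*(a*a) := by nlinarith
        _ ≤ 9 * primorialN t := Nat.mul_le_mul_left 9 haa
        _ = primorialN t * 9 := Nat.mul_comm _ _
        _ ≤ primorialN t * Nat.nth Nat.Prime t := Nat.mul_le_mul_left _ (by omega)
    have h2a : 2*a+1 ≤ x := le_trans (le_trans (Nat.le_sqrt.2 hstep) hx) le_rfl
    obtain ⟨q, hq, haq, hq2a⟩ := Nat.exists_prime_lt_and_le_two_mul a (by omega)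
    have hsub : insert q ((Finset.range (a+1)).filter Nat.Prime)
        ⊆ (Finset.range (x+1)).filter Nat.Prime := by
      intro p hp
      rcases Finset.mem_insert.1 hp with rfl | hp
      · exact Finset.mem_filter.2 ⟨Finset.mem_range.2 (by omega), hq⟩
      · have h := Finset.mem_filter.1 hp
        have := Finset.mem_range.1 h.1
        exact Finset.mem_filter.2 ⟨Finset.mem_range.2 (by omega), h.2⟩
    have hnot : q ∉ (Finset.range (a+1)).filter Nat.Prime := by
      simp only [Finset.mem_filter, Finset.mem_range, not_and]
      intro hlt
      omega
    have hih := ih a le_rfl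
    calc t+1+3 = (t+3)+1 := by omega
      _ ≤ Pc a + 1 := by omega
      _ = (insert q ((Finset.range (a+1)).filter Nat.Prime)).card :=
          (Finset.card_insert_of_notMem hnot).symm
      _ ≤ Pc x := Finset.card_le_card hsub

lemma piBound (t n : ℕ) (hn : 289 ≤ n) (h : primorialN t ≤ n) : t + 3 ≤ Pc (Nat.sqrt n) := by
  rcases le_or_gt t 4 with h4 | h5
  · have h17 : 17 ≤ Nat.sqrt n := Nat.le_sqrt.2 (by omega)
    have := base_primes7 (Nat.sqrt n) h17
    omega
  · exact claimC t h5 _ (Nat.sqrt_le_sqrt h)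

lemma primorialN_le_prod (d : Finset ℕ) (hd : ∀ p ∈ d, p.Prime) :
    primorialN d.card ≤ ∏ p ∈ d, p := by
  induction d using Finset.induction_on_max with
  | empty => simp [primorialN]
  | insert a s ha ih =>
    have hanotmem : a ∉ s := fun h => lt_irrefl a (ha a h)
    have hs : ∀ p ∈ s, p.Prime := fun p hp => hd p (Finset.mem_insert_of_mem hp)
    have hprime_a : a.Prime := hd a (Finset.mem_insert_self a s)
    have h1 : Nat.nth Nat.Prime s.card ≤ a := by
      have hcnt : s.card ≤ Nat.count Nat.Prime a := by
        rw [Nat.count_eq_card_filter_range]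
        apply Finset.card_le_card
        intro p hp
        exact Finset.mem_filter.2 ⟨Finset.mem_range.2 (ha p hp), hs p hp⟩
      calc Nat.nth Nat.Prime s.card
          ≤ Nat.nth Nat.Prime (Nat.count Nat.Prime a) :=
            Nat.nth_monotone Nat.infinite_setOf_prime hcnt
        _ = a := Nat.nth_count hprime_a
    rw [Finset.card_insert_of_notMem hanotmem, primorialN_succ, Finset.prod_insert hanotmem,
      mul_comm a]
    exact Nat.mul_le_mul (ih hs) h1

lemma prime_mul_eq {a b c e : ℕ} (ha : a.Prime) (hb : b.Prime) (hc : c.Prime) (he : e.Prime)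
    (h : a*b = c*e) : (a = c ∧ b = e) ∨ (a = e ∧ b = c) := by
  have hdvd : a ∣ c*e := h ▸ dvd_mul_right a b
  rcases (Nat.Prime.dvd_mul ha).1 hdvd with hac | hae
  · have hac' : a = c := (Nat.prime_dvd_prime_iff_eq ha hc).1 hac
    subst hac'
    exact Or.inl ⟨rfl, Nat.eq_of_mul_eq_mul_left ha.pos h⟩
  · have hae' : a = e := (Nat.prime_dvd_prime_iff_eq ha he).1 hae
    subst hae'
    rw [mul_comm c a] at h
    exact Or.inr ⟨rfl, Nat.eq_of_mul_eq_mul_left ha.pos h⟩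

set_option maxHeartbeats 1600000 in
lemma phiT_tail (n : ℕ) (hn : 289 ≤ n) : 7 ≤ phiT n := by
  classical
  set x := Nat.sqrt n with hxdef
  set P := (Finset.range (x+1)).filter Nat.Prime with hP
  set d := P.filter (fun p => p ∣ n) with hd
  set s := P.filter (fun p => ¬ p ∣ n) with hs
  have hd_primes : ∀ p ∈ d, p.Prime := fun p hp =>
    (Finset.mem_filter.1 (Finset.mem_filter.1 hp).1).2
  have hdn : (∏ p ∈ d, p) ∣ n :=
    Finset.prod_primes_dvd n (fun p hp => (hd_primes p hp).prime)
      (fun p hp => (Finset.mem_filter.1 hp).2)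
  have h1 : primorialN d.card ≤ n :=
    le_trans (primorialN_le_prod d hd_primes) (Nat.le_of_dvd (by omega) hdn)
  have h2 : d.card + 3 ≤ P.card := piBound d.card n hn h1
  have hsplit : d.card + s.card = P.card := by
    rw [hd, hs]
    exact Finset.card_filter_add_card_filter_not (fun p => p ∣ n)
  have h3 : 3 ≤ s.card := by omega
  obtain ⟨u, hus, hucard⟩ := Finset.exists_subset_card_eq h3
  obtain ⟨p, q, r, hpq, hpr, hqr, hu⟩ := Finset.card_eq_three.1 hucard
  rw [hu] at hus
  have hmemS : ∀ {a : ℕ}, a ∈ s → a.Prime ∧ a ≤ x ∧ ¬ a ∣ n := by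
    intro a haa
    have h1 := Finset.mem_filter.1 haa
    have h2 := Finset.mem_filter.1 h1.1
    exact ⟨h2.2, by have := Finset.mem_range.1 h2.1; omega, h1.2⟩
  obtain ⟨hp, hpx, hpn⟩ := hmemS (a := p) (hus (by simp))
  obtain ⟨hq, hqx, hqn⟩ := hmemS (a := q) (hus (by simp))
  obtain ⟨hr, hrx, hrn⟩ := hmemS (a := r) (hus (by simp))
  clear_value P d s
  clear hP hd hs hd_primes hdn h1 h2 hsplit h3 hus hu hucard hmemS
  clear u d s P
  have hone : ∀ {a b : ℕ}, a.Prime → b.Prime → (1:ℕ) ≠ a*b := by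
    intro a b ha hb h
    have h4 : 2*2 ≤ a*b := Nat.mul_le_mul ha.two_le hb.two_le
    rw [← h] at h4
    norm_num at h4
  have n1pp := hone hp hp
  have n1pq := hone hp hq
  have n1pr := hone hp hr
  have n1qq := hone hq hq
  have n1qr := hone hq hr
  have n1rr := hone hr hr
  have npp_pq : p*p ≠ p*q := fun h => by
    rcases prime_mul_eq hp hp hp hq h with ⟨h1, h2⟩ | ⟨h1, h2⟩ <;> omega
  have npp_pr : p*p ≠ p*r := fun h => by
    rcases prime_mul_eq hp hp hp hr h with ⟨h1, h2⟩ | ⟨h1, h2⟩ <;> omega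
  have npp_qq : p*p ≠ q*q := fun h => by
    rcases prime_mul_eq hp hp hq hq h with ⟨h1, h2⟩ | ⟨h1, h2⟩ <;> omega
  have npp_qr : p*p ≠ q*r := fun h => by
    rcases prime_mul_eq hp hp hq hr h with ⟨h1, h2⟩ | ⟨h1, h2⟩ <;> omega
  have npp_rr : p*p ≠ r*r := fun h => by
    rcases prime_mul_eq hp hp hr hr h with ⟨h1, h2⟩ | ⟨h1, h2⟩ <;> omega
  have npq_pr : p*q ≠ p*r := fun h => by
    rcases prime_mul_eq hp hq hp hr h with ⟨h1, h2⟩ | ⟨h1, h2⟩ <;> omega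
  have npq_qq : p*q ≠ q*q := fun h => by
    rcases prime_mul_eq hp hq hq hq h with ⟨h1, h2⟩ | ⟨h1, h2⟩ <;> omega
  have npq_qr : p*q ≠ q*r := fun h => by
    rcases prime_mul_eq hp hq hq hr h with ⟨h1, h2⟩ | ⟨h1, h2⟩ <;> omega
  have npq_rr : p*q ≠ r*r := fun h => by
    rcases prime_mul_eq hp hq hr hr h with ⟨h1, h2⟩ | ⟨h1, h2⟩ <;> omega
  have npr_qq : p*r ≠ q*q := fun h => by
    rcases prime_mul_eq hp hr hq hq h with ⟨h1, h2⟩ | ⟨h1, h2⟩ <;> omega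
  have npr_qr : p*r ≠ q*r := fun h => by
    rcases prime_mul_eq hp hr hq hr h with ⟨h1, h2⟩ | ⟨h1, h2⟩ <;> omega
  have npr_rr : p*r ≠ r*r := fun h => by
    rcases prime_mul_eq hp hr hr hr h with ⟨h1, h2⟩ | ⟨h1, h2⟩ <;> omega
  have nqq_qr : q*q ≠ q*r := fun h => by
    rcases prime_mul_eq hq hq hq hr h with ⟨h1, h2⟩ | ⟨h1, h2⟩ <;> omega
  have nqq_rr : q*q ≠ r*r := fun h => by
    rcases prime_mul_eq hq hq hr hr h with ⟨h1, h2⟩ | ⟨h1, h2⟩ <;> omega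
  have nqr_rr : q*r ≠ r*r := fun h => by
    rcases prime_mul_eq hq hr hr hr h with ⟨h1, h2⟩ | ⟨h1, h2⟩ <;> omega
  have hxx : x * x ≤ n := Nat.sqrt_le n
  have hmul_le : ∀ {a b : ℕ}, a ≤ x → b ≤ x → a*b ≤ n := fun ha hb =>
    le_trans (Nat.mul_le_mul ha hb) hxx
  have hmem : ∀ {a b : ℕ}, a.Prime → b.Prime → ¬ a ∣ n → ¬ b ∣ n → a ≤ x → b ≤ x →
      a*b ∈ (Finset.Icc 1 n).filter (fun m => Nat.gcd m n = 1 ∧ ¬ m.Prime) := by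
    intro a b ha hb han hbn hax hbx
    refine Finset.mem_filter.2 ⟨Finset.mem_Icc.2 ⟨?_, hmul_le hax hbx⟩, ?_, ?_⟩
    · exact Nat.mul_pos ha.pos hb.pos
    · exact Nat.Coprime.mul (ha.coprime_iff_not_dvd.2 han) (hb.coprime_iff_not_dvd.2 hbn)
    · exact Nat.not_prime_mul (by have := ha.two_le; omega) (by have := hb.two_le; omega)
  have h1mem : (1:ℕ) ∈ (Finset.Icc 1 n).filter (fun m => Nat.gcd m n = 1 ∧ ¬ m.Prime) :=
    Finset.mem_filter.2 ⟨Finset.mem_Icc.2 ⟨le_rfl, by omega⟩,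
      Nat.gcd_one_left n, Nat.not_prime_one⟩
  have hTsub : ({1, p*p, p*q, p*r, q*q, q*r, r*r} : Finset ℕ) ⊆
      (Finset.Icc 1 n).filter (fun m => Nat.gcd m n = 1 ∧ ¬ m.Prime) := by
    intro m hm
    simp only [Finset.mem_insert, Finset.mem_singleton] at hm
    rcases hm with rfl|rfl|rfl|rfl|rfl|rfl|rfl
    · exact h1mem
    · exact hmem hp hp hpn hpn hpx hpx
    · exact hmem hp hq hpn hqn hpx hqx
    · exact hmem hp hr hpn hrn hpx hrx
    · exact hmem hq hq hqn hqn hqx hqx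
    · exact hmem hq hr hqn hrn hqx hrx
    · exact hmem hr hr hrn hrn hrx hrx
  have hTcard : ({1, p*p, p*q, p*r, q*q, q*r, r*r} : Finset ℕ).card = 7 := by
    rw [Finset.card_insert_of_notMem (by
        simp only [Finset.mem_insert, Finset.mem_singleton]
        push_neg
        exact ⟨n1pp, n1pq, n1pr, n1qq, n1qr, n1rr⟩),
      Finset.card_insert_of_notMem (by
        simp only [Finset.mem_insert, Finset.mem_singleton]
        push_neg
        exact ⟨npp_pq, npp_pr, npp_qq, npp_qr, npp_rr⟩),
      Finset.card_insert_of_notMem (by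
        simp only [Finset.mem_insert, Finset.mem_singleton]
        push_neg
        exact ⟨npq_pr, npq_qq, npq_qr, npq_rr⟩),
      Finset.card_insert_of_notMem (by
        simp only [Finset.mem_insert, Finset.mem_singleton]
        push_neg
        exact ⟨npr_qq, npr_qr, npr_rr⟩),
      Finset.card_insert_of_notMem (by
        simp only [Finset.mem_insert, Finset.mem_singleton]
        push_neg
        exact ⟨nqq_qr, nqq_rr⟩),
      Finset.card_insert_of_notMem (by
        simp only [Finset.mem_singleton]
        exact nqr_rr),
      Finset.card_singleton]
  calc (7:ℕ) = ({1, p*p, p*q, p*r, q*q, q*r, r*r} : Finset ℕ).card := hTcard.symm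
    _ ≤ ((Finset.Icc 1 n).filter (fun m => Nat.gcd m n = 1 ∧ ¬ m.Prime)).card :=
        Finset.card_le_card hTsub
    _ = phiT n := rfl

theorem stmt17 (n : ℕ) (hn : 0 < n) :
    phiT n = 6 ↔ n ∈ ({11, 21, 32, 40, 72, 78, 210} : Finset ℕ) := by
  rcases le_or_gt n 288 with h | h
  · have hs := phiT_small n hn h
    simp only [Finset.mem_insert, Finset.mem_singleton]
    exact hs
  · constructor
    · intro h6
      have := phiT_tail n (by omega)
      omega
    · intro hm
      simp only [Finset.mem_insert, Finset.mem_singleton] at hm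
      omega
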